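/- Let ε₁, ε₂ be the standard basis of ℤ² and set q₂₂ := χ(ε₂,ε₂), q₁₂ := χ(ε₁,ε₂), q₂₁ := χ(ε₂,ε₁). Define λ' : ℕ≥1 → k by λ'(1) := χ(ε₂,ε₁)⁻¹ − χ(ε₁,ε₂) and λ'(m+1) := λ'(m) + χ(ε₂, ε₁+m·ε₂)⁻¹ − χ(ε₁+m·ε₂, ε₂). Then for every m ≥ 1: λ'(m) = q₂₁⁻¹ · [m]_{q₂₂⁻¹} · (1 − q₂₂^{m−1}·q₁₂·q₂₁). (This is the closed formula for λ(a) at the node a on the left spine of the Stern–Brocot tree with rgfl(a) = m, i.e. with degree ε₁ + m·ε₂, right godfather of degree ε₁ + (m−1)·ε₂ and left godfather the left ghost of degree ε₂.) -/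

import Mathlib

open scoped BigOperators

/-- The q-number `[n]_q := 1 + q + ⋯ + q^{n−1}`. -/
def qNum {k : Type*} [Semiring k] (q : k) (n : ℕ) : k :=
  ∑ i ∈ Finset.range n, q ^ i

/-- Let `χ : ℤ² × ℤ² → kˣ` be a bicharacter, `ε₁ = (1,0)`, `ε₂ = (0,1)`,
`q₂₂ := χ(ε₂,ε₂)`, `q₁₂ := χ(ε₁,ε₂)`, `q₂₁ := χ(ε₂,ε₁)`. If `λ' : ℕ≥1 → k`
satisfies `λ'(1) = χ(ε₂,ε₁)⁻¹ − χ(ε₁,ε₂)` and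
`λ'(m+1) = λ'(m) + χ(ε₂, ε₁+m·ε₂)⁻¹ − χ(ε₁+m·ε₂, ε₂)` for all `m ≥ 1`, then for
every `m ≥ 1`: `λ'(m) = q₂₁⁻¹ · [m]_{q₂₂⁻¹} · (1 − q₂₂^{m−1}·q₁₂·q₂₁)`. -/
lemma qNum_inv_mul_pow {k : Type*} [Field k] {q : k} (hq : q ≠ 0) (n : ℕ) :
    qNum q⁻¹ (n+1) * q ^ n = qNum q (n+1) := by
  rw [qNum, qNum, Finset.sum_mul, ← Finset.sum_range_reflect (fun j => q ^ j) (n+1)]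
  refine Finset.sum_congr rfl fun i hi => ?_
  rw [Finset.mem_range, Nat.lt_succ_iff] at hi
  simp only [Nat.add_sub_cancel]
  rw [inv_pow, inv_mul_eq_div, div_eq_iff (pow_ne_zero i hq), ← pow_add,
    Nat.sub_add_cancel hi]


theorem lambda_left_spine_closed_formula
    (k : Type*) [Field k]
    (χ : ℤ × ℤ → ℤ × ℤ → kˣ)
    (hχ₁ : ∀ x y z : ℤ × ℤ, χ (x + y) z = χ x z * χ y z)
    (hχ₂ : ∀ x y z : ℤ × ℤ, χ x (y + z) = χ x y * χ x z)
    (lam' : ℕ → k)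
    (hlam₁ : lam' 1 = (χ (0, 1) (1, 0) : k)⁻¹ - (χ (1, 0) (0, 1) : k))
    (hlam : ∀ m : ℕ, 1 ≤ m → lam' (m + 1) = lam' m +
      (χ (0, 1) (((1, 0) : ℤ × ℤ) + m • ((0, 1) : ℤ × ℤ)) : k)⁻¹ -
      (χ (((1, 0) : ℤ × ℤ) + m • ((0, 1) : ℤ × ℤ)) (0, 1) : k)) :
    ∀ m : ℕ, 1 ≤ m → lam' m =
      (χ (0, 1) (1, 0) : k)⁻¹ * qNum ((χ (0, 1) (0, 1) : k)⁻¹) m *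
        (1 - (χ (0, 1) (0, 1) : k) ^ (m - 1) *
          (χ (1, 0) (0, 1) : k) * (χ (0, 1) (1, 0) : k)) := by
  have helper2 : ∀ n : ℕ, χ (0,1) (((1, 0) : ℤ × ℤ) + n • ((0, 1) : ℤ × ℤ)) =
      χ (0,1) (1,0) * (χ (0,1) (0,1)) ^ n := by
    intro n
    induction n with
    | zero => simp
    | succ n ih =>
      rw [succ_nsmul, ← add_assoc, hχ₂, ih, pow_succ, mul_assoc]
  have helper1 : ∀ n : ℕ, χ (((1, 0) : ℤ × ℤ) + n • ((0, 1) : ℤ × ℤ)) (0,1) =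
      χ (1,0) (0,1) * (χ (0,1) (0,1)) ^ n := by
    intro n
    induction n with
    | zero => simp
    | succ n ih =>
      rw [succ_nsmul, ← add_assoc, hχ₁, ih, mul_assoc, ← pow_succ]
  set a : k := (χ (0,1) (1,0) : k) with ha
  set b : k := (χ (1,0) (0,1) : k) with hb
  set q : k := (χ (0,1) (0,1) : k) with hq
  have ha0 : a ≠ 0 := Units.ne_zero _
  have hb0 : b ≠ 0 := Units.ne_zero _
  have hq0 : q ≠ 0 := Units.ne_zero _
  intro m hm
  induction m, hm using Nat.le_induction with
  | base =>
    rw [hlam₁]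
    simp only [qNum, Finset.sum_range_one, pow_zero]
    field_simp
    ring
  | succ m hm ih =>
    obtain ⟨n, rfl⟩ : ∃ n, m = n + 1 := ⟨m - 1, (Nat.succ_pred_eq_of_pos hm).symm⟩
    rw [hlam _ hm, ih]
    have e2 : ((χ (0,1) (((1, 0) : ℤ × ℤ) + (n+1) • ((0, 1) : ℤ × ℤ))) : k) = a * q ^ (n+1) := by
      rw [helper2]; push_cast; rfl
    have e1 : ((χ (((1, 0) : ℤ × ℤ) + (n+1) • ((0, 1) : ℤ × ℤ)) (0,1)) : k) = b * q ^ (n+1) := by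
      rw [helper1]; push_cast; rfl
    rw [e1, e2]
    have h1 : qNum q⁻¹ (n+1) = qNum q (n+1) * (q ^ n)⁻¹ := by
      rw [← qNum_inv_mul_pow hq0 n]
      field_simp
    have h2 : qNum q⁻¹ (n+1+1) = qNum q (n+1+1) * (q ^ (n+1))⁻¹ := by
      rw [← qNum_inv_mul_pow hq0 (n+1)]
      field_simp
    have h3 : qNum q (n+1+1) = qNum q (n+1) + q ^ (n+1) := by
      rw [qNum, qNum, Finset.sum_range_succ]
    have geom : qNum q (n+1) * (q - 1) = q ^ (n+1) - 1 := geom_sum_mul q (n+1)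
    rw [h1, h2, h3]
    simp only [Nat.add_sub_cancel]
    set S : k := qNum q (n+1)
    field_simp
    ring_nf
    linear_combination (q^n) * geom
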